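/- Let T and S be bounded linear operators on H admitting reduced A-adjoints T^♯ and S^♯. Then ‖T^♯T + S^♯S‖_A ≤ (1/2)·(‖T‖_A² + ‖S‖_A² + √((‖T‖_A² − ‖S‖_A²)² + 4‖TS^♯‖_A²)). -/

import Mathlib

open ContinuousLinearMap

variable {H : Type*} [NormedAddCommGroup H] [InnerProductSpace ℂ H] [CompleteSpace H]

/-- The seminorm on `H` induced by a positive operator `A`: `‖x‖_A = √⟨Ax,x⟩`. -/
noncomputable def vnA (A : H →L[ℂ] H) (x : H) : ℝ :=
  Real.sqrt (RCLike.re (inner ℂ (A x) x : ℂ))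

/-- The `A`-seminorm of an operator: `‖X‖_A = sup {‖Xx‖_A : ‖x‖_A = 1}`. -/
noncomputable def opnA (A : H →L[ℂ] H) (X : H →L[ℂ] H) : ℝ :=
  sSup ((fun x => vnA A (X x)) '' {x : H | vnA A x = 1})

/-- The `A`-numerical radius: `ω_A(X) = sup {|⟨Xx,x⟩_A| : ‖x‖_A = 1}`. -/
noncomputable def wA (A : H →L[ℂ] H) (X : H →L[ℂ] H) : ℝ :=
  sSup ((fun x => ‖(inner ℂ (A (X x)) x : ℂ)‖) '' {x : H | vnA A x = 1})

/-- `S` is the reduced `A`-adjoint of `T`: `A ∘ S = T* ∘ A` and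
`range S ⊆ closure (range A)`. -/
def IsReducedAdjA (A T S : H →L[ℂ] H) : Prop :=
  A ∘L S = (ContinuousLinearMap.adjoint T) ∘L A ∧
    Set.range S ⊆ closure (Set.range (A : H → H))

/-- `X` is `A`-selfadjoint: `A ∘ X = X* ∘ A`. -/
def IsSelfAdjA (A X : H →L[ℂ] H) : Prop :=
  A ∘L X = (ContinuousLinearMap.adjoint X) ∘L A

/-- `Re_A(T) = (T + T♯)/2`. -/
noncomputable def ReA (T Ts : H →L[ℂ] H) : H →L[ℂ] H := (2 : ℂ)⁻¹ • (T + Ts)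

/-- `Im_A(T) = (T - T♯)/(2i)`. -/
noncomputable def ImA (T Ts : H →L[ℂ] H) : H →L[ℂ] H := (2 * Complex.I)⁻¹ • (T - Ts)

set_option linter.unusedVariables false
set_option linter.unusedSectionVars false


/-- Pointwise bound for `A`-selfadjoint operators: `‖B D x‖ ≤ ‖D‖ ‖B x‖` where `A = B²`. -/
lemma coreA (A B D : H →L[ℂ] H) (hBA : B ∘L B = A) (hB : adjoint B = B)
    (hD : A ∘L D = adjoint D ∘L A) (x : H) : ‖B (D x)‖ ≤ ‖D‖ * ‖B x‖ := by
  have hAB : ∀ w y : H, (inner ℂ (A w) y : ℂ) = inner ℂ (B w) (B y) := by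
    intro w y
    have : A w = (adjoint B) (B w) := by rw [hB, ← hBA]; rfl
    rw [this, adjoint_inner_left]
  have hBsq : ∀ w : H, RCLike.re (inner ℂ (A w) w : ℂ) = ‖B w‖ ^ 2 := by
    intro w; rw [hAB]; exact inner_self_eq_norm_sq _
  -- A * D^m = (D^m)* * A
  have hpow : ∀ m : ℕ, A ∘L (D ^ m) = adjoint (D ^ m) ∘L A := by
    intro m
    induction m with
    | zero =>
        simp only [pow_zero]
        have h1 : (1 : H →L[ℂ] H) = ContinuousLinearMap.id ℂ H := rfl
        ext y; simp [h1, adjoint_id]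
    | succ n ih =>
      have h1 : A ∘L D ^ (n+1) = (A ∘L D ^ n) ∘L D := by
        rw [pow_succ]; rfl
      rw [h1, ih, comp_assoc, hD, ← comp_assoc, ← adjoint_comp]
      congr 2
      rw [show D.comp (D ^ n) = D * D ^ n from rfl, ← pow_succ', pow_succ]
  -- key inner identity
  have hkey : ∀ m : ℕ, (inner ℂ (A ((D ^ m) x)) ((D ^ m) x) : ℂ)
      = inner ℂ (B x) (B ((D ^ (m + m)) x)) := by
    intro m
    have h1 : A ((D ^ m) x) = (adjoint (D ^ m)) (A x) := DFunLike.congr_fun (hpow m) x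
    rw [h1, adjoint_inner_left, ← hAB]
    congr 1
    rw [pow_add]; rfl
  set u : ℕ → ℝ := fun n => ‖B ((D ^ (2 ^ n)) x)‖ with hu
  have hstep : ∀ n : ℕ, u n ^ 2 ≤ u (n + 1) * ‖B x‖ := by
    intro n
    have h1 : u n ^ 2 = RCLike.re (inner ℂ (A ((D ^ (2 ^ n)) x)) ((D ^ (2 ^ n)) x) : ℂ) := by
      rw [hBsq]
    rw [h1, hkey]
    have h2 : (2:ℕ) ^ n + 2 ^ n = 2 ^ (n + 1) := by ring
    rw [h2]
    calc RCLike.re (inner ℂ (B x) (B ((D ^ (2 ^ (n+1))) x)) : ℂ)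
        ≤ ‖(inner ℂ (B x) (B ((D ^ (2 ^ (n+1))) x)) : ℂ)‖ := RCLike.re_le_norm _
      _ ≤ ‖B x‖ * ‖B ((D ^ (2 ^ (n+1))) x)‖ := norm_inner_le_norm _ _
      _ = u (n+1) * ‖B x‖ := by rw [mul_comm]
  have hubd : ∀ n : ℕ, u n ≤ ‖B‖ * ‖D‖ ^ (2 ^ n) * ‖x‖ := by
    intro n
    calc u n ≤ ‖B‖ * ‖(D ^ (2 ^ n)) x‖ := le_opNorm _ _
      _ ≤ ‖B‖ * (‖D ^ (2 ^ n)‖ * ‖x‖) := by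
          gcongr; exact le_opNorm _ _
      _ ≤ ‖B‖ * (‖D‖ ^ (2 ^ n) * ‖x‖) := by
          have hdp : ‖D ^ 2 ^ n‖ ≤ ‖D‖ ^ 2 ^ n :=
            norm_pow_le' D (by positivity)
          gcongr
      _ = ‖B‖ * ‖D‖ ^ (2 ^ n) * ‖x‖ := by ring
  have hu0 : u 0 = ‖B (D x)‖ := by simp [hu]
  -- case Bx = 0
  rcases eq_or_lt_of_le (norm_nonneg (B x)) with hbx | hbx
  · have h1 := hstep 0
    rw [← hbx] at h1
    simp only [mul_zero] at h1
    have h2 : u 0 = 0 := by nlinarith [norm_nonneg (B ((D ^ (2 ^ 0)) x)), sq_nonneg (u 0)]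
    rw [← hu0, h2, ← hbx, mul_zero]
  -- case D = 0
  rcases eq_or_lt_of_le (norm_nonneg D) with hd | hd
  · have : D = 0 := by rw [← norm_eq_zero, ← hd]
    simp only [this, zero_apply, map_zero, norm_zero]
    positivity
  -- main case: chain inequality
  have hchain : ∀ n : ℕ, u 0 ^ (2 ^ n) ≤ u n * ‖B x‖ ^ (2 ^ n - 1) := by
    intro n
    induction n with
    | zero => simp
    | succ n ih =>
      have hun : 0 ≤ u n := norm_nonneg _
      have h1 : u 0 ^ (2 ^ (n+1)) = (u 0 ^ (2 ^ n)) ^ 2 := by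
        rw [← pow_mul]; ring_nf
      have h2 : (u 0 ^ (2 ^ n)) ^ 2 ≤ (u n * ‖B x‖ ^ (2 ^ n - 1)) ^ 2 := by
        apply pow_le_pow_left₀ (by positivity) ih
      have h3 : (u n * ‖B x‖ ^ (2 ^ n - 1)) ^ 2 = u n ^ 2 * ‖B x‖ ^ (2 * (2 ^ n - 1)) := by
        rw [mul_pow, ← pow_mul]; ring_nf
      have h4 : u n ^ 2 * ‖B x‖ ^ (2 * (2 ^ n - 1))
          ≤ (u (n+1) * ‖B x‖) * ‖B x‖ ^ (2 * (2 ^ n - 1)) := by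
        apply mul_le_mul_of_nonneg_right (hstep n) (by positivity)
      have h5 : (u (n+1) * ‖B x‖) * ‖B x‖ ^ (2 * (2 ^ n - 1))
          = u (n+1) * ‖B x‖ ^ (2 ^ (n+1) - 1) := by
        have hn : 1 ≤ 2 ^ n := Nat.one_le_two_pow
        have : 2 * (2 ^ n - 1) + 1 = 2 ^ (n+1) - 1 := by
          have : 2 ^ (n+1) = 2 * 2 ^ n := by ring
          omega
        rw [← this, pow_add, pow_one]; ring
      linarith
  -- conclude by contradiction
  rw [← hu0]
  by_contra hcon
  push_neg at hcon
  set r : ℝ := u 0 / (‖D‖ * ‖B x‖) with hr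
  have hdb : 0 < ‖D‖ * ‖B x‖ := mul_pos hd hbx
  have hr1 : 1 < r := (one_lt_div hdb).2 hcon
  set K : ℝ := ‖B‖ * ‖x‖ / ‖B x‖ with hK
  have hrK : ∀ n : ℕ, r ^ (2 ^ n) ≤ K := by
    intro n
    have h1 : u 0 ^ (2 ^ n) ≤ (‖B‖ * ‖D‖ ^ (2 ^ n) * ‖x‖) * ‖B x‖ ^ (2 ^ n - 1) := by
      calc u 0 ^ (2 ^ n) ≤ u n * ‖B x‖ ^ (2 ^ n - 1) := hchain n
        _ ≤ (‖B‖ * ‖D‖ ^ (2 ^ n) * ‖x‖) * ‖B x‖ ^ (2 ^ n - 1) := by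
            apply mul_le_mul_of_nonneg_right (hubd n) (by positivity)
      -- done
    have hone : 1 ≤ 2 ^ n := Nat.one_le_two_pow
    have h2 : ‖B x‖ ^ (2 ^ n - 1) * ‖B x‖ = ‖B x‖ ^ (2 ^ n) := by
      rw [← pow_succ]
      congr 1
      omega
    rw [hr, div_pow, div_le_iff₀ (by positivity), hK, div_mul_eq_mul_div,
      le_div_iff₀ hbx]
    calc u 0 ^ 2 ^ n * ‖B x‖
        ≤ ((‖B‖ * ‖D‖ ^ (2 ^ n) * ‖x‖) * ‖B x‖ ^ (2 ^ n - 1)) * ‖B x‖ := by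
          apply mul_le_mul_of_nonneg_right h1 (le_of_lt hbx)
      _ = ‖B‖ * ‖x‖ * (‖D‖ ^ (2 ^ n) * ‖B x‖ ^ (2 ^ n)) := by
          rw [mul_assoc, h2]; ring
      _ = ‖B‖ * ‖x‖ * (‖D‖ * ‖B x‖) ^ 2 ^ n := by rw [mul_pow]
  obtain ⟨n, hn⟩ := pow_unbounded_of_one_lt K hr1
  have : r ^ n ≤ r ^ (2 ^ n) :=
    pow_le_pow_right₀ (le_of_lt hr1) (le_of_lt Nat.lt_two_pow_self)
  exact absurd (le_trans this (hrK n)) (not_le.2 hn)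

lemma innerAB (A B : H →L[ℂ] H) (hBA : B ∘L B = A) (hB : adjoint B = B) (w y : H) :
    (inner ℂ (A w) y : ℂ) = inner ℂ (B w) (B y) := by
  have : A w = (adjoint B) (B w) := by rw [hB, ← hBA]; rfl
  rw [this, adjoint_inner_left]

lemma vnA_B (A B : H →L[ℂ] H) (hBA : B ∘L B = A) (hB : adjoint B = B) (x : H) :
    vnA A x = ‖B x‖ := by
  unfold vnA
  rw [innerAB A B hBA hB, inner_self_eq_norm_sq]
  exact Real.sqrt_sq (norm_nonneg _)

lemma opnA_B (A B X : H →L[ℂ] H) (hBA : B ∘L B = A) (hB : adjoint B = B) :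
    opnA A X = sSup ((fun x => ‖B (X x)‖) '' {x : H | ‖B x‖ = 1}) := by
  unfold opnA
  simp only [vnA_B A B hBA hB]

lemma opnA_nonneg (A X : H →L[ℂ] H) : 0 ≤ opnA A X := by
  apply Real.sSup_nonneg
  rintro _ ⟨x, hx, rfl⟩
  exact Real.sqrt_nonneg _

lemma sq_le_imp (x k : ℝ) (hx : 0 ≤ x) (hk : 0 ≤ k) (h : x ^ 2 ≤ k * x) : x ≤ k := by
  rcases eq_or_lt_of_le hx with h0 | h0
  · rw [← h0]; exact hk
  · nlinarith

lemma elemA (A B X : H →L[ℂ] H) (hBA : B ∘L B = A) (hB : adjoint B = B)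
    (c : ℝ) (hc : 0 ≤ c) (hX : ∀ y, ‖B (X y)‖ ≤ c * ‖B y‖) :
    (∀ y, ‖B (X y)‖ ≤ opnA A X * ‖B y‖) ∧ opnA A X ≤ c := by
  have hbdd : BddAbove ((fun x => ‖B (X x)‖) '' {x : H | ‖B x‖ = 1}) := by
    refine ⟨c, ?_⟩
    rintro _ ⟨x, hx, rfl⟩
    have hx1 : ‖B x‖ = 1 := hx
    calc ‖B (X x)‖ ≤ c * ‖B x‖ := hX x
      _ = c := by rw [hx1, mul_one]
  constructor
  · intro y
    rcases eq_or_ne ‖B y‖ 0 with h0 | h0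
    · rw [h0, mul_zero]
      calc ‖B (X y)‖ ≤ c * ‖B y‖ := hX y
        _ = 0 := by rw [h0, mul_zero]
    · have ht : 0 < ‖B y‖ := lt_of_le_of_ne (norm_nonneg _) (Ne.symm h0)
      set t : ℝ := ‖B y‖ with htdef
      set z : H := ((t⁻¹ : ℝ) : ℂ) • y with hzdef
      have hz1 : ‖B z‖ = 1 := by
        rw [hzdef, map_smul, norm_smul, Complex.norm_real, Real.norm_eq_abs,
          abs_of_pos (inv_pos.2 ht), ← htdef, inv_mul_cancel₀ (ne_of_gt ht)]
      have hXz : ‖B (X z)‖ = t⁻¹ * ‖B (X y)‖ := by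
        rw [hzdef, map_smul, map_smul, norm_smul, Complex.norm_real, Real.norm_eq_abs,
          abs_of_pos (inv_pos.2 ht)]
      have hle : ‖B (X z)‖ ≤ opnA A X := by
        rw [opnA_B A B X hBA hB]
        exact le_csSup hbdd ⟨z, hz1, rfl⟩
      rw [hXz] at hle
      calc ‖B (X y)‖ = (t⁻¹ * ‖B (X y)‖) * t := by field_simp
        _ ≤ opnA A X * t := mul_le_mul_of_nonneg_right hle ht.le
  · rw [opnA_B A B X hBA hB]
    apply Real.sSup_le _ hc
    rintro _ ⟨x, hx, rfl⟩
    have hx1 : ‖B x‖ = 1 := hx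
    calc ‖B (X x)‖ ≤ c * ‖B x‖ := hX x
      _ = c := by rw [hx1, mul_one]

lemma quadB (a b c u v s : ℝ) (ha : 0 ≤ a) (hb : 0 ≤ b) (hc : 0 ≤ c) (hu : 0 ≤ u)
    (hv : 0 ≤ v) (hs0 : 0 ≤ s) (hs2 : s ^ 2 = (a^2 - b^2)^2 + 4 * c^2) :
    (a*u)^2 + 2*(c*(u*v)) + (b*v)^2 ≤ ((1/2)*(a^2 + b^2 + s)) * (u^2 + v^2) := by
  have hα : 0 ≤ (b^2 - a^2 + s)/2 := by nlinarith [sq_nonneg c, sq_nonneg (a^2 - b^2 + s)]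
  have hβ : 0 ≤ (a^2 - b^2 + s)/2 := by nlinarith [sq_nonneg c, sq_nonneg (b^2 - a^2 + s)]
  have hc2 : ((b^2 - a^2 + s)/2) * ((a^2 - b^2 + s)/2) = c^2 := by linear_combination hs2 / 4
  have key : 2*(c*(u*v)) ≤ ((b^2 - a^2 + s)/2)*u^2 + ((a^2 - b^2 + s)/2)*v^2 := by
    have h2 := two_mul_le_add_sq (Real.sqrt ((b^2 - a^2 + s)/2) * u)
      (Real.sqrt ((a^2 - b^2 + s)/2) * v)
    have e1 : (Real.sqrt ((b^2 - a^2 + s)/2) * u)^2 = ((b^2 - a^2 + s)/2)*u^2 := by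
      rw [mul_pow, Real.sq_sqrt hα]
    have e2 : (Real.sqrt ((a^2 - b^2 + s)/2) * v)^2 = ((a^2 - b^2 + s)/2)*v^2 := by
      rw [mul_pow, Real.sq_sqrt hβ]
    have e3 : Real.sqrt ((b^2 - a^2 + s)/2) * Real.sqrt ((a^2 - b^2 + s)/2) = c := by
      rw [← Real.sqrt_mul hα, hc2, Real.sqrt_sq hc]
    calc 2*(c*(u*v)) = 2 * (Real.sqrt ((b^2 - a^2 + s)/2) * u)
          * (Real.sqrt ((a^2 - b^2 + s)/2) * v) := by rw [← e3]; ring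
      _ ≤ (Real.sqrt ((b^2 - a^2 + s)/2) * u)^2
          + (Real.sqrt ((a^2 - b^2 + s)/2) * v)^2 := h2
      _ = ((b^2 - a^2 + s)/2)*u^2 + ((a^2 - b^2 + s)/2)*v^2 := by rw [e1, e2]
  nlinarith [key]

set_option maxHeartbeats 2000000 in
theorem stmt15 (A T S Ts Ss : H →L[ℂ] H) (hA : A.IsPositive) (hA0 : A ≠ 0)
    (hTs : IsReducedAdjA A T Ts) (hSs : IsReducedAdjA A S Ss) :
    opnA A (Ts ∘L T + Ss ∘L S) ≤
      (1/2) * ((opnA A T)^2 + (opnA A S)^2 +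
        Real.sqrt (((opnA A T)^2 - (opnA A S)^2)^2 + 4 * (opnA A (T ∘L Ss))^2)) := by
  classical
  -- square root of A
  obtain ⟨B, hBpos, hBA⟩ : ∃ B : H →L[ℂ] H, B.IsPositive ∧ B ∘L B = A := by
    have h0 : (0 : H →L[ℂ] H) ≤ A := (ContinuousLinearMap.nonneg_iff_isPositive A).2 hA
    refine ⟨CFC.sqrt A, (ContinuousLinearMap.nonneg_iff_isPositive _).1 (CFC.sqrt_nonneg A), ?_⟩
    have := CFC.sq_sqrt A h0
    rwa [sq] at this
  have hB : adjoint B = B := ((star_eq_adjoint B).symm.trans hBpos.isSelfAdjoint)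
  have hAsa : adjoint A = A := ((star_eq_adjoint A).symm.trans hA.isSelfAdjoint)
  have hT1 : A ∘L Ts = adjoint T ∘L A := hTs.1
  have hS1 : A ∘L Ss = adjoint S ∘L A := hSs.1
  have hT2 : adjoint Ts ∘L A = A ∘L T := by
    have := congrArg adjoint hT1
    rwa [adjoint_comp, adjoint_comp, hAsa, adjoint_adjoint] at this
  have hS2 : adjoint Ss ∘L A = A ∘L S := by
    have := congrArg adjoint hS1
    rwa [adjoint_comp, adjoint_comp, hAsa, adjoint_adjoint] at this
  -- A-selfadjointness of Ts∘T and S∘Ss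
  have hDsaT : A ∘L (Ts ∘L T) = adjoint (Ts ∘L T) ∘L A := by
    rw [adjoint_comp, ← comp_assoc, hT1, comp_assoc, ← hT2, ← comp_assoc]
  have hDsaS : A ∘L (S ∘L Ss) = adjoint (S ∘L Ss) ∘L A := by
    rw [adjoint_comp, ← comp_assoc, ← hS2, comp_assoc, hS1, ← comp_assoc]
  -- pointwise inner identities
  have hiT : ∀ w y : H, (inner ℂ (A (Ts w)) y : ℂ) = inner ℂ (A w) (T y) := by
    intro w y
    have h1 : A (Ts w) = (adjoint T) (A w) := DFunLike.congr_fun hT1 w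
    rw [h1, adjoint_inner_left]
  have hiS : ∀ w y : H, (inner ℂ (A (Ss w)) y : ℂ) = inner ℂ (A w) (S y) := by
    intro w y
    have h1 : A (Ss w) = (adjoint S) (A w) := DFunLike.congr_fun hS1 w
    rw [h1, adjoint_inner_left]
  have hAB := innerAB A B hBA hB
  have hBsq : ∀ w : H, RCLike.re (inner ℂ (A w) w : ℂ) = ‖B w‖ ^ 2 := by
    intro w; rw [hAB]; exact inner_self_eq_norm_sq _
  -- pointwise boundedness of T, S, Ss
  have hTbd : ∀ y, ‖B (T y)‖ ≤ Real.sqrt ‖Ts ∘L T‖ * ‖B y‖ := by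
    intro y
    have h1 : ‖B (T y)‖ ^ 2 ≤ ‖Ts ∘L T‖ * ‖B y‖ ^ 2 := by
      have e1 : ‖B (T y)‖ ^ 2 = RCLike.re (inner ℂ (A ((Ts ∘L T) y)) y : ℂ) := by
        rw [show (Ts ∘L T) y = Ts (T y) from rfl, hiT, hBsq]
      rw [e1, hAB]
      calc RCLike.re (inner ℂ (B ((Ts ∘L T) y)) (B y) : ℂ)
          ≤ ‖(inner ℂ (B ((Ts ∘L T) y)) (B y) : ℂ)‖ := RCLike.re_le_norm _
        _ ≤ ‖B ((Ts ∘L T) y)‖ * ‖B y‖ := norm_inner_le_norm _ _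
        _ ≤ (‖Ts ∘L T‖ * ‖B y‖) * ‖B y‖ :=
            mul_le_mul_of_nonneg_right (coreA A B _ hBA hB hDsaT y) (norm_nonneg _)
        _ = ‖Ts ∘L T‖ * ‖B y‖ ^ 2 := by ring
    have h2 : ‖B (T y)‖ = Real.sqrt (‖B (T y)‖ ^ 2) := (Real.sqrt_sq (norm_nonneg _)).symm
    rw [h2]
    calc Real.sqrt (‖B (T y)‖ ^ 2) ≤ Real.sqrt (‖Ts ∘L T‖ * ‖B y‖ ^ 2) :=
        Real.sqrt_le_sqrt h1
      _ = Real.sqrt ‖Ts ∘L T‖ * ‖B y‖ := by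
          rw [Real.sqrt_mul (norm_nonneg _), Real.sqrt_sq (norm_nonneg _)]
  have hSbd : ∀ y, ‖B (S y)‖ ≤ Real.sqrt ‖Ss ∘L S‖ * ‖B y‖ := by
    intro y
    have hDsaS' : A ∘L (Ss ∘L S) = adjoint (Ss ∘L S) ∘L A := by
      rw [adjoint_comp, ← comp_assoc, hS1, comp_assoc, ← hS2, ← comp_assoc]
    have h1 : ‖B (S y)‖ ^ 2 ≤ ‖Ss ∘L S‖ * ‖B y‖ ^ 2 := by
      have e1 : ‖B (S y)‖ ^ 2 = RCLike.re (inner ℂ (A ((Ss ∘L S) y)) y : ℂ) := by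
        rw [show (Ss ∘L S) y = Ss (S y) from rfl, hiS, hBsq]
      rw [e1, hAB]
      calc RCLike.re (inner ℂ (B ((Ss ∘L S) y)) (B y) : ℂ)
          ≤ ‖(inner ℂ (B ((Ss ∘L S) y)) (B y) : ℂ)‖ := RCLike.re_le_norm _
        _ ≤ ‖B ((Ss ∘L S) y)‖ * ‖B y‖ := norm_inner_le_norm _ _
        _ ≤ (‖Ss ∘L S‖ * ‖B y‖) * ‖B y‖ :=
            mul_le_mul_of_nonneg_right (coreA A B _ hBA hB hDsaS' y) (norm_nonneg _)
        _ = ‖Ss ∘L S‖ * ‖B y‖ ^ 2 := by ring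
    have h2 : ‖B (S y)‖ = Real.sqrt (‖B (S y)‖ ^ 2) := (Real.sqrt_sq (norm_nonneg _)).symm
    rw [h2]
    calc Real.sqrt (‖B (S y)‖ ^ 2) ≤ Real.sqrt (‖Ss ∘L S‖ * ‖B y‖ ^ 2) :=
        Real.sqrt_le_sqrt h1
      _ = Real.sqrt ‖Ss ∘L S‖ * ‖B y‖ := by
          rw [Real.sqrt_mul (norm_nonneg _), Real.sqrt_sq (norm_nonneg _)]
  have hSsbd : ∀ y, ‖B (Ss y)‖ ≤ Real.sqrt ‖S ∘L Ss‖ * ‖B y‖ := by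
    intro y
    have h1 : ‖B (Ss y)‖ ^ 2 ≤ ‖S ∘L Ss‖ * ‖B y‖ ^ 2 := by
      have e1 : (inner ℂ (A (Ss y)) (Ss y) : ℂ) = inner ℂ (A y) ((S ∘L Ss) y) := hiS y (Ss y)
      have e2 : ‖B (Ss y)‖ ^ 2 = RCLike.re (inner ℂ (A y) ((S ∘L Ss) y) : ℂ) := by
        rw [← e1, hBsq]
      rw [e2, hAB]
      calc RCLike.re (inner ℂ (B y) (B ((S ∘L Ss) y)) : ℂ)
          ≤ ‖(inner ℂ (B y) (B ((S ∘L Ss) y)) : ℂ)‖ := RCLike.re_le_norm _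
        _ ≤ ‖B y‖ * ‖B ((S ∘L Ss) y)‖ := norm_inner_le_norm _ _
        _ ≤ ‖B y‖ * (‖S ∘L Ss‖ * ‖B y‖) :=
            mul_le_mul_of_nonneg_left (coreA A B _ hBA hB hDsaS y) (norm_nonneg _)
        _ = ‖S ∘L Ss‖ * ‖B y‖ ^ 2 := by ring
    have h2 : ‖B (Ss y)‖ = Real.sqrt (‖B (Ss y)‖ ^ 2) := (Real.sqrt_sq (norm_nonneg _)).symm
    rw [h2]
    calc Real.sqrt (‖B (Ss y)‖ ^ 2) ≤ Real.sqrt (‖S ∘L Ss‖ * ‖B y‖ ^ 2) :=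
        Real.sqrt_le_sqrt h1
      _ = Real.sqrt ‖S ∘L Ss‖ * ‖B y‖ := by
          rw [Real.sqrt_mul (norm_nonneg _), Real.sqrt_sq (norm_nonneg _)]
  have hTSsbd : ∀ y, ‖B ((T ∘L Ss) y)‖
      ≤ (Real.sqrt ‖Ts ∘L T‖ * Real.sqrt ‖S ∘L Ss‖) * ‖B y‖ := by
    intro y
    calc ‖B ((T ∘L Ss) y)‖ = ‖B (T (Ss y))‖ := rfl
      _ ≤ Real.sqrt ‖Ts ∘L T‖ * ‖B (Ss y)‖ := hTbd (Ss y)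
      _ ≤ Real.sqrt ‖Ts ∘L T‖ * (Real.sqrt ‖S ∘L Ss‖ * ‖B y‖) :=
          mul_le_mul_of_nonneg_left (hSsbd y) (Real.sqrt_nonneg _)
      _ = (Real.sqrt ‖Ts ∘L T‖ * Real.sqrt ‖S ∘L Ss‖) * ‖B y‖ := by ring
  -- sSup element bounds
  have heT := (elemA A B T hBA hB _ (Real.sqrt_nonneg _) hTbd).1
  have heS := (elemA A B S hBA hB _ (Real.sqrt_nonneg _) hSbd).1
  have heC := (elemA A B (T ∘L Ss) hBA hB _
    (mul_nonneg (Real.sqrt_nonneg _) (Real.sqrt_nonneg _)) hTSsbd).1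
  set a := opnA A T with hadef
  set b := opnA A S with hbdef
  set c := opnA A (T ∘L Ss) with hcdef
  have ha0 : 0 ≤ a := opnA_nonneg A T
  have hb0 : 0 ≤ b := opnA_nonneg A S
  have hc0 : 0 ≤ c := opnA_nonneg A (T ∘L Ss)
  set s := Real.sqrt ((a^2 - b^2)^2 + 4 * c^2) with hsdef
  have hs0 : 0 ≤ s := Real.sqrt_nonneg _
  have hs2 : s ^ 2 = (a^2 - b^2)^2 + 4 * c^2 := Real.sq_sqrt (by positivity)
  set M : ℝ := (1/2) * (a^2 + b^2 + s) with hMdef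
  have hM0 : 0 ≤ M := by positivity
  -- main bound
  rw [opnA_B A B _ hBA hB]
  apply Real.sSup_le _ hM0
  rintro _ ⟨z, hz, rfl⟩
  have hz1 : ‖B z‖ = 1 := hz
  set u := ‖B (T z)‖ with hudef
  set v := ‖B (S z)‖ with hvdef
  have hu0 : 0 ≤ u := norm_nonneg _
  have hv0 : 0 ≤ v := norm_nonneg _
  have hu : u ≤ a := by
    have := heT z; rwa [hz1, mul_one] at this
  have hv : v ≤ b := by
    have := heS z; rwa [hz1, mul_one] at this
  set p := (Ts ∘L T) z with hpdef
  set q := (Ss ∘L S) z with hqdef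
  -- ‖Bp‖ ≤ a*u
  have hp : ‖B p‖ ≤ a * u := by
    apply sq_le_imp _ _ (norm_nonneg _) (by positivity)
    have e1 : (inner ℂ (A p) p : ℂ) = inner ℂ (B (T z)) (B (T p)) := by
      rw [hpdef, show (Ts ∘L T) z = Ts (T z) from rfl, hiT, hAB]
    have e2 : ‖B p‖ ^ 2 = RCLike.re (inner ℂ (B (T z)) (B (T p)) : ℂ) := by
      rw [← e1, hBsq]
    rw [e2]
    calc RCLike.re (inner ℂ (B (T z)) (B (T p)) : ℂ)
        ≤ ‖(inner ℂ (B (T z)) (B (T p)) : ℂ)‖ := RCLike.re_le_norm _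
      _ ≤ ‖B (T z)‖ * ‖B (T p)‖ := norm_inner_le_norm _ _
      _ ≤ u * (a * ‖B p‖) := mul_le_mul_of_nonneg_left (heT p) hu0
      _ = (a * u) * ‖B p‖ := by ring
  have hq : ‖B q‖ ≤ b * v := by
    apply sq_le_imp _ _ (norm_nonneg _) (by positivity)
    have e1 : (inner ℂ (A q) q : ℂ) = inner ℂ (B (S z)) (B (S q)) := by
      rw [hqdef, show (Ss ∘L S) z = Ss (S z) from rfl, hiS, hAB]
    have e2 : ‖B q‖ ^ 2 = RCLike.re (inner ℂ (B (S z)) (B (S q)) : ℂ) := by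
      rw [← e1, hBsq]
    rw [e2]
    calc RCLike.re (inner ℂ (B (S z)) (B (S q)) : ℂ)
        ≤ ‖(inner ℂ (B (S z)) (B (S q)) : ℂ)‖ := RCLike.re_le_norm _
      _ ≤ ‖B (S z)‖ * ‖B (S q)‖ := norm_inner_le_norm _ _
      _ ≤ v * (b * ‖B q‖) := mul_le_mul_of_nonneg_left (heS q) hv0
      _ = (b * v) * ‖B q‖ := by ring
  -- cross term
  have hcr : RCLike.re (inner ℂ (B p) (B q) : ℂ) ≤ c * (u * v) := by
    have e1 : (inner ℂ (B p) (B q) : ℂ) = inner ℂ (B (T z)) (B ((T ∘L Ss) (S z))) := by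
      rw [← hAB, hpdef, show (Ts ∘L T) z = Ts (T z) from rfl, hiT, hAB]
      rfl
    rw [e1]
    calc RCLike.re (inner ℂ (B (T z)) (B ((T ∘L Ss) (S z))) : ℂ)
        ≤ ‖(inner ℂ (B (T z)) (B ((T ∘L Ss) (S z))) : ℂ)‖ := RCLike.re_le_norm _
      _ ≤ ‖B (T z)‖ * ‖B ((T ∘L Ss) (S z))‖ := norm_inner_le_norm _ _
      _ ≤ u * (c * v) := mul_le_mul_of_nonneg_left (heC (S z)) hu0
      _ = c * (u * v) := by ring
  -- u² + v² ≤ ‖B(p+q)‖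
  have hsum : u^2 + v^2 = RCLike.re (inner ℂ (B (p + q)) (B z) : ℂ) := by
    have e1 : (inner ℂ (B (p + q)) (B z) : ℂ) = inner ℂ (A (p + q)) z := (hAB _ _).symm
    have e2 : (inner ℂ (A (p + q)) z : ℂ) = inner ℂ (A p) z + inner ℂ (A q) z := by
      rw [map_add, inner_add_left]
    have e3 : (inner ℂ (A p) z : ℂ) = inner ℂ (A (T z)) (T z) := by
      rw [hpdef, show (Ts ∘L T) z = Ts (T z) from rfl, hiT]
    have e4 : (inner ℂ (A q) z : ℂ) = inner ℂ (A (S z)) (S z) := by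
      rw [hqdef, show (Ss ∘L S) z = Ss (S z) from rfl, hiS]
    rw [e1, e2, e3, e4, map_add, hBsq, hBsq]
  have hm : u^2 + v^2 ≤ ‖B (p + q)‖ := by
    rw [hsum]
    calc RCLike.re (inner ℂ (B (p + q)) (B z) : ℂ)
        ≤ ‖(inner ℂ (B (p + q)) (B z) : ℂ)‖ := RCLike.re_le_norm _
      _ ≤ ‖B (p + q)‖ * ‖B z‖ := norm_inner_le_norm _ _
      _ = ‖B (p + q)‖ := by rw [hz1, mul_one]
  -- ‖B(p+q)‖² ≤ M(u²+v²)
  have hw2 : ‖B (p + q)‖ ^ 2 ≤ M * (u^2 + v^2) := by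
    have e1 : ‖B (p + q)‖ ^ 2 = ‖B p‖^2 + 2 * RCLike.re (inner ℂ (B p) (B q) : ℂ) + ‖B q‖^2 := by
      rw [map_add]; exact norm_add_sq _ _
    have h1 : ‖B p‖^2 ≤ (a*u)^2 := by
      apply pow_le_pow_left₀ (norm_nonneg _) hp
    have h2 : ‖B q‖^2 ≤ (b*v)^2 := by
      apply pow_le_pow_left₀ (norm_nonneg _) hq
    calc ‖B (p + q)‖ ^ 2 = ‖B p‖^2 + 2 * RCLike.re (inner ℂ (B p) (B q) : ℂ) + ‖B q‖^2 := e1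
      _ ≤ (a*u)^2 + 2*(c*(u*v)) + (b*v)^2 := by linarith
      _ ≤ M * (u^2 + v^2) := quadB a b c u v s ha0 hb0 hc0 hu0 hv0 hs0 hs2
  -- conclude
  have hfin : ‖B ((Ts ∘L T + Ss ∘L S) z)‖ = ‖B (p + q)‖ := by
    rw [hpdef, hqdef]; rfl
  show ‖B ((Ts ∘L T + Ss ∘L S) z)‖ ≤ M
  rw [hfin]
  apply sq_le_imp _ _ (norm_nonneg _) hM0
  calc ‖B (p + q)‖ ^ 2 ≤ M * (u^2 + v^2) := hw2
    _ ≤ M * ‖B (p + q)‖ := mul_le_mul_of_nonneg_left hm hM0
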